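/- For every α ≥ 1 and k ≥ 1 there exist constants C_1 > 0 and C_2, C_3, C_4 ≥ 0 (depending only on α and k) such that for every n, every k-CNF formula φ over n variables, and every α-log-Lipschitz distribution D on {0,1}^n: if Pr_{x∼D}[x ⊨ φ] < C_1 ε^{C_2} min{ε^{C_3}, n^{-C_4}}, then Pr_{x∼D}[∃ z ∈ B_{log n}(x) with z ⊨ φ] ≤ ε, for all 0 < ε < 1/2. -/

import Mathlib

open Finset

/-- Probability of an event under a weight function `D` on `ι → Bool`. -/
noncomputable def pr {ι : Type*} [Fintype ι] [DecidableEq ι] (D : (ι → Bool) → ℝ)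
    (P : (ι → Bool) → Prop) : ℝ := by
  classical exact ∑ x, if P x then D x else 0

/-- `D` is a probability distribution with full support. -/
def IsDistribution {ι : Type*} [Fintype ι] [DecidableEq ι] (D : (ι → Bool) → ℝ) : Prop :=
  (∀ x, 0 < D x) ∧ ∑ x, D x = 1

/-- `D` is `α`-log-Lipschitz: points at Hamming distance 1 have log-probabilities
within `log α`. -/
def LogLipschitz {ι : Type*} [Fintype ι] [DecidableEq ι] (α : ℝ) (D : (ι → Bool) → ℝ) : Prop :=
  ∀ x x' : ι → Bool, hammingDist x x' = 1 →
    |Real.log (D x) - Real.log (D x')| ≤ Real.log α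

/-- A CNF formula over `{0,1}ⁿ`: a finite set of clauses, each clause a finite
set of literals `(i, b)` requiring `x i = b`. -/
abbrev CNF (n : ℕ) := Finset (Finset (Fin n × Bool))

/-- `x` satisfies the CNF `φ`: every clause contains a true literal. -/
def SatCNF {n : ℕ} (φ : CNF n) (x : Fin n → Bool) : Prop :=
  ∀ C ∈ φ, ∃ l ∈ C, x l.1 = l.2

/-- `φ` is a `k`-CNF: every clause has at most `k` literals. -/
def IsKCNF {n : ℕ} (k : ℕ) (φ : CNF n) : Prop := ∀ C ∈ φ, C.card ≤ k

/-- The variables mentioned by a clause. -/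
def clauseVars {n : ℕ} (C : Finset (Fin n × Bool)) : Finset (Fin n) :=
  C.image Prod.fst

namespace KP
variable {n : ℕ}

abbrev Pt (n : ℕ) := Fin n → Bool

/-- flip one coordinate -/
def flip (z : Pt n) (v : Fin n) : Pt n := Function.update z v (!z v)

/-- difference set -/
def DF (x y : Pt n) : Finset (Fin n) := univ.filter fun i => x i ≠ y i

/-- flip a set of coordinates -/
def flipS (z : Pt n) (U : Finset (Fin n)) : Pt n := fun v => if v ∈ U then !z v else z v

lemma hd_card (x y : Pt n) : hammingDist x y = (DF x y).card := by
  rw [hammingDist, DF]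

lemma flipS_DF (x z : Pt n) : flipS z (DF x z) = x := by
  funext v
  by_cases h : x v = z v
  · simp [flipS, DF, h]
  · simp only [flipS, DF, mem_filter, mem_univ, true_and, ne_eq, h, not_false_eq_true, if_pos]
    cases hz : z v <;> cases hx : x v <;> simp_all

lemma DF_flipS (z : Pt n) (U : Finset (Fin n)) : DF (flipS z U) z = U := by
  ext v
  by_cases h : v ∈ U <;> simp [DF, flipS, h]

lemma DF_comm (x y : Pt n) : DF x y = DF y x := by
  ext v; simp [DF, ne_comm]

lemma DF_flipS_subset (z : Pt n) {S U : Finset (Fin n)} (hSU : S ⊆ U) :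
    DF (flipS z S) (flipS z U) = U \ S := by
  ext v
  by_cases hS : v ∈ S
  · simp only [DF, mem_filter, mem_univ, true_and, mem_sdiff]; simp [flipS, hS, hSU hS]
  · by_cases hU : v ∈ U <;> simp only [DF, mem_filter, mem_univ, true_and, mem_sdiff] <;> simp [flipS, hS, hU]

lemma flip_eq_flipS (z : Pt n) (v : Fin n) : flip z v = flipS z {v} := by
  funext u
  by_cases h : u = v <;> simp [flip, flipS, Function.update, h]

lemma DF_flip (x z : Pt n) {v : Fin n} (hv : v ∈ DF x z) :
    DF x (flip z v) = (DF x z).erase v := by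
  ext u
  by_cases h : u = v
  · subst h
    simp only [DF, mem_filter, mem_univ, true_and] at hv ⊢
    have hfl : (flip z u) u = !z u := by simp [flip]
    simp only [hfl, mem_erase, ne_eq, not_true_eq_false, false_and, iff_false, not_not]
    cases hz : z u <;> cases hx : x u <;> simp_all
  · simp only [DF, mem_filter, mem_univ, true_and, mem_erase, ne_eq, h, not_false_eq_true,
      true_and]
    have : (flip z v) u = z u := by simp [flip, Function.update, h]
    rw [this]


lemma DF_flip_self (y : Pt n) (v : Fin n) : DF (flip y v) y = {v} := by
  rw [flip_eq_flipS, DF_flipS]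

lemma flip_flip (z : Pt n) (w : Fin n) : flip (flip z w) w = z := by
  funext u
  by_cases h : u = w
  · subst h; simp [flip]
  · simp [flip, Function.update, h]

section Lip
variable {α : ℝ} {D : Pt n → ℝ}

lemma lip_step (hD : IsDistribution D) (hL : LogLipschitz α D) (hα : 1 ≤ α)
    {x y : Pt n} (h1 : hammingDist x y = 1) : D x ≤ α * D y := by
  have hax : (0:ℝ) < α := lt_of_lt_of_le one_pos hα
  have hx := hD.1 x
  have hy := hD.1 y
  have h := hL x y h1
  have h2 : Real.log (D x) - Real.log (D y) ≤ Real.log α := le_trans (le_abs_self _) h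
  have h3 : Real.log (D x) ≤ Real.log (α * D y) := by
    rw [Real.log_mul (ne_of_gt hax) (ne_of_gt hy)]; linarith
  exact (Real.log_le_log_iff hx (by positivity)).mp h3

lemma lip_pow (hD : IsDistribution D) (hL : LogLipschitz α D) (hα : 1 ≤ α)
    (x y : Pt n) : D x ≤ α ^ (hammingDist x y) * D y := by
  have hax : (0:ℝ) < α := lt_of_lt_of_le one_pos hα
  suffices H : ∀ d : ℕ, ∀ x y : Pt n, (DF x y).card = d → D x ≤ α ^ d * D y by
    rw [hd_card]; exact H _ x y rfl
  intro d
  induction d with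
  | zero =>
    intro x y h0
    have : x = y := by
      funext v
      by_contra hv
      have hmem : v ∈ DF x y := by simp [DF, hv]
      rw [card_eq_zero] at h0
      simp [h0] at hmem
    simp [this]
  | succ d ih =>
    intro x y hcard
    have hne : (DF x y).Nonempty := by
      rw [← card_pos, hcard]; omega
    obtain ⟨v, hv⟩ := hne
    set y' := flip y v with hy'
    have hDF' : DF x y' = (DF x y).erase v := DF_flip x y hv
    have hcard' : (DF x y').card = d := by
      rw [hDF', card_erase_of_mem hv, hcard]; rfl
    have hd1 : hammingDist y' y = 1 := by
      rw [hd_card, DF_flip_self]; simp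
    have step : D y' ≤ α * D y := lip_step hD hL hα hd1
    have ihx : D x ≤ α ^ d * D y' := ih x y' hcard'
    calc D x ≤ α ^ d * D y' := ihx
      _ ≤ α ^ d * (α * D y) := by
          apply mul_le_mul_of_nonneg_left step (by positivity)
      _ = α ^ (d + 1) * D y := by ring

lemma lip_pow_le (hD : IsDistribution D) (hL : LogLipschitz α D) (hα : 1 ≤ α)
    {x y : Pt n} {m : ℕ} (hm : hammingDist x y ≤ m) : D x ≤ α ^ m * D y := by
  refine le_trans (lip_pow hD hL hα x y) ?_
  apply mul_le_mul_of_nonneg_right _ (le_of_lt (hD.1 y))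
  exact pow_le_pow_right₀ hα hm

end Lip
section Sat
variable (φ : CNF n)

open Classical in
/-- satisfying assignments as a Finset -/
noncomputable def Zset : Finset (Pt n) := univ.filter (SatCNF φ)

open Classical in
lemma mem_Zset {z : Pt n} : z ∈ Zset φ ↔ SatCNF φ z := by simp [Zset]

/-- a violated clause exists -/
def vio (x : Pt n) : Prop := ∃ C ∈ φ, ∀ l ∈ C, x l.1 ≠ l.2

lemma not_sat_iff_vio (x : Pt n) : ¬ SatCNF φ x ↔ vio φ x := by
  unfold SatCNF vio
  push_neg
  rfl

open Classical in
/-- a canonical violated clause -/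
noncomputable def vC (x : Pt n) : Finset (Fin n × Bool) :=
  if h : vio φ x then h.choose else ∅

lemma vC_spec {x : Pt n} (h : vio φ x) :
    vC φ x ∈ φ ∧ ∀ l ∈ vC φ x, x l.1 ≠ l.2 := by
  rw [vC, dif_pos h]
  exact h.choose_spec

open Classical in
/-- critical coordinates of z : flipping them breaks satisfaction -/
noncomputable def crit (z : Pt n) : Finset (Fin n) :=
  univ.filter fun v => ¬ SatCNF φ (flip z v)

open Classical in
lemma mem_crit {z : Pt n} {v : Fin n} : v ∈ crit φ z ↔ ¬ SatCNF φ (flip z v) := by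
  simp [crit]

/-- the canonical critical clause -/
noncomputable def cC (z : Pt n) (v : Fin n) : Finset (Fin n × Bool) := vC φ (flip z v)

lemma flip_self (z : Pt n) (v : Fin n) : (flip z v) v = !z v := by simp [flip]
lemma flip_other (z : Pt n) {v u : Fin n} (h : u ≠ v) : (flip z v) u = z u := by
  simp [flip, Function.update, h]

/-- structure of the critical clause -/
lemma cC_props {z : Pt n} (hz : SatCNF φ z) {v : Fin n} (hv : v ∈ crit φ z) :
    cC φ z v ∈ φ ∧ (v, z v) ∈ cC φ z v ∧
    (∀ l ∈ cC φ z v, l.1 ≠ v → z l.1 ≠ l.2) ∧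
    (∀ l ∈ cC φ z v, l.1 = v → l.2 = z v) := by
  have hvio : vio φ (flip z v) := (not_sat_iff_vio φ _).mp (mem_crit φ |>.mp hv)
  obtain ⟨hmem, hfalse⟩ := vC_spec φ hvio
  have hC : cC φ z v = vC φ (flip z v) := rfl
  rw [hC]
  refine ⟨hmem, ?_, ?_, ?_⟩
  · -- z satisfies this clause via a literal which must be (v, z v)
    obtain ⟨l, hl, hlt⟩ := hz _ hmem
    have h1 : l.1 = v := by
      by_contra hne
      exact hfalse l hl (by rw [flip_other z hne]; exact hlt)
    have h2 : l.2 = z v := by rw [← h1, hlt]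
    have : l = (v, z v) := Prod.ext h1 h2
    rwa [← this]
  · intro l hl hne
    have := hfalse l hl
    rwa [flip_other z hne] at this
  · intro l hl hl1
    have := hfalse l hl
    rw [hl1, flip_self] at this
    cases hb : z v <;> cases hb2 : l.2 <;> simp_all

lemma cC_vars_card {k : ℕ} (hφ : IsKCNF k φ) {z : Pt n} (hz : SatCNF φ z) {v : Fin n}
    (hv : v ∈ crit φ z) : (clauseVars (cC φ z v)).card ≤ k := by
  refine le_trans (card_image_le) (hφ _ (cC_props φ hz hv).1)

lemma mem_clauseVars_of_mem {C : Finset (Fin n × Bool)} {l : Fin n × Bool} (h : l ∈ C) :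
    l.1 ∈ clauseVars C := mem_image_of_mem _ h

end Sat

section Pr
variable (D : Pt n → ℝ)

open Classical in
lemma pr_eq_sum_filter (P : Pt n → Prop) : pr D P = ∑ x ∈ univ.filter P, D x := by
  rw [pr, sum_filter]

lemma pr_nonneg (hD : IsDistribution D) (P : Pt n → Prop) : 0 ≤ pr D P := by
  rw [pr]
  apply sum_nonneg
  intro x _
  by_cases h : P x <;> simp [h, le_of_lt (hD.1 x)]

end Pr

section PPZ
variable (φ : CNF n) (D : Pt n → ℝ) {α : ℝ} (π : Equiv.Perm (Fin n))

/-- `z` agrees with `y` on coordinates of π-position < j -/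
def Ag (j : ℕ) (y z : Pt n) : Prop := ∀ u : Fin n, (π u : ℕ) < j → z u = y u

instance AgDec (j : ℕ) (y z : Pt n) : Decidable (Ag π j y z) := by
  unfold Ag; infer_instance

/-- mass of the prefix cylinder -/
noncomputable def F (j : ℕ) (y : Pt n) : ℝ := ∑ z ∈ univ.filter (fun z => Ag π j y z), D z

lemma Ag_zero (y z : Pt n) : Ag π 0 y z := by intro u hu; omega

lemma Ag_self (j : ℕ) (y : Pt n) : Ag π j y y := by intro u _; rfl

lemma Ag_mono {j j' : ℕ} (h : j ≤ j') {y z : Pt n} (ha : Ag π j' y z) : Ag π j y z :=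
  fun u hu => ha u (lt_of_lt_of_le hu h)

lemma Ag_succ {j : ℕ} (hj : j < n) (y z : Pt n) :
    Ag π (j+1) y z ↔ (Ag π j y z ∧ z (π.symm ⟨j, hj⟩) = y (π.symm ⟨j, hj⟩)) := by
  constructor
  · intro h
    refine ⟨Ag_mono π (Nat.le_succ j) h, h _ ?_⟩
    simp
  · rintro ⟨h1, h2⟩ u hu
    rcases Nat.lt_succ_iff_lt_or_eq.mp hu with h | h
    · exact h1 u h
    · have : π u = ⟨j, hj⟩ := Fin.ext h
      have hu : u = π.symm ⟨j, hj⟩ := by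
        rw [← this]; simp
      rw [hu]; exact h2

lemma Ag_update_off {j : ℕ} {w : Fin n} (hw : j ≤ (π w : ℕ)) (y z : Pt n) (b : Bool) :
    Ag π j (Function.update y w b) z ↔ Ag π j y z := by
  constructor <;> intro h u hu <;>
    [skip; skip] <;>
    · have hne : u ≠ w := by
        intro he; subst he; omega
      have := h u hu
      simpa [Function.update, hne] using this

lemma F_zero (hD : IsDistribution D) (y : Pt n) : F D π 0 y = 1 := by
  rw [F]
  have : (univ.filter (fun z => Ag π 0 y z)) = univ := by
    apply filter_true_of_mem
    intro z _
    exact Ag_zero π y z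
  rw [this]
  exact hD.2

lemma F_top (y : Pt n) : F D π n y = D y := by
  classical
  rw [F]
  have : (univ.filter (fun z => Ag π n y z)) = {y} := by
    ext z
    simp only [mem_filter, mem_univ, true_and, mem_singleton]
    constructor
    · intro h
      funext u
      exact h u (π u).isLt
    · rintro rfl
      exact Ag_self _ _ _
  rw [this, sum_singleton]

lemma F_pos (hD : IsDistribution D) (j : ℕ) (y : Pt n) : 0 < F D π j y := by
  classical
  rw [F]
  apply sum_pos
  · intro z _; exact hD.1 z
  · exact ⟨y, by simp [Ag_self]⟩

lemma F_nonneg (hD : IsDistribution D) (j : ℕ) (y : Pt n) : 0 ≤ F D π j y :=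
  le_of_lt (F_pos D π hD j y)

lemma F_congr {j : ℕ} {y y' : Pt n} (h : Ag π j y y') : F D π j y = F D π j y' := by
  classical
  rw [F, F]
  apply sum_congr
  · ext z
    simp only [mem_filter, mem_univ, true_and]
    constructor
    · intro hz u hu
      rw [hz u hu, h u hu]
    · intro hz u hu
      rw [hz u hu, h u hu]
  · intros; rfl

lemma F_split {j : ℕ} (hj : j < n) (y : Pt n) :
    F D π j y = F D π (j+1) (Function.update y (π.symm ⟨j, hj⟩) true)
      + F D π (j+1) (Function.update y (π.symm ⟨j, hj⟩) false) := by
  classical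
  set w := π.symm ⟨j, hj⟩ with hwdef
  have hw : (π w : ℕ) = j := by rw [hwdef]; simp
  have key : ∀ b : Bool, univ.filter (fun z => Ag π (j+1) (Function.update y w b) z)
      = univ.filter (fun z => Ag π j y z ∧ z w = b) := by
    intro b
    ext z
    simp only [mem_filter, mem_univ, true_and]
    rw [Ag_succ π hj]
    rw [Ag_update_off π (le_of_eq hw.symm)]
    simp [Function.update, ← hwdef]
  rw [F, F, F, key, key]
  rw [← sum_filter_add_sum_filter_not (univ.filter (fun z => Ag π j y z)) (fun z => z w = true)]
  congr 1
  · rw [filter_filter]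
  · rw [filter_filter]
    apply sum_congr _ (fun _ _ => rfl)
    ext z
    simp only [mem_filter, mem_univ, true_and, and_congr_right_iff]
    intro _
    cases h : z w <;> simp

lemma filter_Ag_succ {j : ℕ} (hj : j < n) (y : Pt n) (b : Bool) :
    univ.filter (fun z => Ag π (j+1) (Function.update y (π.symm ⟨j, hj⟩) b) z)
      = univ.filter (fun z => Ag π j y z ∧ z (π.symm ⟨j, hj⟩) = b) := by
  classical
  set w := π.symm ⟨j, hj⟩ with hwdef
  have hw : (π w : ℕ) = j := by rw [hwdef]; simp
  ext z
  simp only [mem_filter, mem_univ, true_and]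
  rw [Ag_succ π hj, Ag_update_off π (le_of_eq hw.symm)]
  simp [Function.update, ← hwdef]

lemma F_flip_le (hD : IsDistribution D) (hL : LogLipschitz α D) (hα : 1 ≤ α)
    {j : ℕ} (hj : j < n) (y : Pt n) (b : Bool) :
    F D π (j+1) (Function.update y (π.symm ⟨j, hj⟩) b)
      ≤ α * F D π (j+1) (Function.update y (π.symm ⟨j, hj⟩) (!b)) := by
  classical
  set w := π.symm ⟨j, hj⟩ with hwdef
  rw [F, F, filter_Ag_succ π hj y b, filter_Ag_succ π hj y (!b), mul_sum]
  have hd1 : ∀ z : Pt n, hammingDist z (flip z w) = 1 := by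
    intro z
    rw [hd_card, DF_comm, DF_flip_self]
    simp
  have hre : ∑ z ∈ univ.filter (fun z => Ag π j y z ∧ z w = !b), α * D z
      = ∑ z ∈ univ.filter (fun z => Ag π j y z ∧ z w = b), α * D (flip z w) := by
    apply sum_nbij' (i := fun z => flip z w) (j := fun z => flip z w)
    · intro z hz
      simp only [mem_filter, mem_univ, true_and] at hz ⊢
      refine ⟨fun u hu => ?_, ?_⟩
      · have hne : u ≠ w := by
          intro he; subst he
          have : (π w : ℕ) = j := by rw [hwdef]; simp
          omega
        rw [flip_other _ hne]; exact hz.1 u hu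
      · rw [flip_self, hz.2, Bool.not_not]
    · intro z hz
      simp only [mem_filter, mem_univ, true_and] at hz ⊢
      refine ⟨fun u hu => ?_, ?_⟩
      · have hne : u ≠ w := by
          intro he; subst he
          have : (π w : ℕ) = j := by rw [hwdef]; simp
          omega
        rw [flip_other _ hne]; exact hz.1 u hu
      · rw [flip_self, hz.2]
    · intro z _
      funext u
      by_cases h : u = w
      · subst h; rw [flip_self, flip_self, Bool.not_not]
      · rw [flip_other _ h, flip_other _ h]
    · intro z _
      funext u
      by_cases h : u = w
      · subst h; rw [flip_self, flip_self, Bool.not_not]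
      · rw [flip_other _ h, flip_other _ h]
    · intro z _
      rw [flip_flip]
  rw [hre]
  apply sum_le_sum
  intro z _
  exact lip_step hD hL hα (hd1 z)

lemma F_cond_le (hD : IsDistribution D) (hL : LogLipschitz α D) (hα : 1 ≤ α)
    {j : ℕ} (hj : j < n) (y : Pt n) (b : Bool) :
    (1 + α) * F D π (j+1) (Function.update y (π.symm ⟨j, hj⟩) b)
      ≤ α * F D π j y := by
  have hax : (0:ℝ) < α := lt_of_lt_of_le one_pos hα
  have hsplit := F_split D π hj y
  have hflip := F_flip_le D π hD hL hα hj y b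
  have h0 : 0 ≤ F D π (j+1) (Function.update y (π.symm ⟨j, hj⟩) b) :=
    F_nonneg D π hD _ _
  -- F_b ≤ α * F_{!b}  and  F j y = F_true + F_false  =>  (1+α) F_b ≤ α (F_b + F_{!b}) ≤ α F j y
  have hsum : F D π (j+1) (Function.update y (π.symm ⟨j, hj⟩) b)
      + F D π (j+1) (Function.update y (π.symm ⟨j, hj⟩) (!b)) = F D π j y := by
    cases b
    · rw [hsplit]; simp [add_comm]
    · rw [hsplit]; simp
  nlinarith [F_nonneg D π hD (j+1) (Function.update y (π.symm ⟨j, hj⟩) (!b))]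

lemma F_telescope (hD : IsDistribution D) (z : Pt n) :
    ∏ i ∈ range n, (F D π (i+1) z / F D π i z) = D z := by
  have key : ∀ m : ℕ, ∏ i ∈ range m, (F D π (i+1) z / F D π i z) = F D π m z / F D π 0 z := by
    intro m
    induction m with
    | zero => rw [prod_range_zero, div_self (ne_of_gt (F_pos D π hD 0 z))]
    | succ m ih =>
      have h0 : F D π 0 z ≠ 0 := ne_of_gt (F_pos D π hD 0 z)
      have hm : F D π m z ≠ 0 := ne_of_gt (F_pos D π hD m z)
      rw [prod_range_succ, ih]
      field_simp
  rw [key n, F_top, F_zero D π hD, div_one]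

/-- coordinate `w` is forced to `b` by the prefix of `y` of positions `< j` -/
def Fd (j : ℕ) (w : Fin n) (y : Pt n) (b : Bool) : Prop :=
  ∃ C ∈ φ, (w, b) ∈ C ∧ (∀ l ∈ C, l.1 ≠ w → ((π l.1 : ℕ) < j ∧ y l.1 ≠ l.2)) ∧
    (∀ l ∈ C, l.1 = w → l.2 = b)

def Fcd (j : ℕ) (w : Fin n) (y : Pt n) : Prop := Fd φ π j w y true ∨ Fd φ π j w y false

instance FdDec (j : ℕ) (w : Fin n) (y : Pt n) (b : Bool) : Decidable (Fd φ π j w y b) := by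
  unfold Fd; infer_instance

instance FcdDec (j : ℕ) (w : Fin n) (y : Pt n) : Decidable (Fcd φ π j w y) := by
  unfold Fcd; infer_instance

lemma Fd_congr {j : ℕ} {w : Fin n} {y z : Pt n} (h : Ag π j y z) (b : Bool) :
    Fd φ π j w z b ↔ Fd φ π j w y b := by
  unfold Fd
  constructor
  · rintro ⟨C, hC, hwb, hoth, hself⟩
    refine ⟨C, hC, hwb, fun l hl hlw => ?_, hself⟩
    obtain ⟨h1, h2⟩ := hoth l hl hlw
    exact ⟨h1, by rw [← h l.1 h1]; exact h2⟩
  · rintro ⟨C, hC, hwb, hoth, hself⟩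
    refine ⟨C, hC, hwb, fun l hl hlw => ?_, hself⟩
    obtain ⟨h1, h2⟩ := hoth l hl hlw
    exact ⟨h1, by rw [h l.1 h1]; exact h2⟩

lemma Fcd_congr {j : ℕ} {w : Fin n} {y z : Pt n} (h : Ag π j y z) :
    Fcd φ π j w z ↔ Fcd φ π j w y := by
  unfold Fcd
  rw [Fd_congr φ π h, Fd_congr φ π h]

lemma Fd_forces {j : ℕ} {w : Fin n} {z : Pt n} {b : Bool}
    (hz : SatCNF φ z) (h : Fd φ π j w z b) : z w = b := by
  obtain ⟨C, hC, hwb, hoth, hself⟩ := h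
  obtain ⟨l, hl, hlt⟩ := hz C hC
  by_cases hlw : l.1 = w
  · rw [← hlw, hlt, hself l hl hlw]
  · exact absurd hlt (hoth l hl hlw).2

open Classical in
noncomputable def Wfac (z : Pt n) (i : ℕ) : ℝ :=
  if h : i < n then
    (if Fcd φ π i (π.symm ⟨i, h⟩) z then 1 else F D π (i+1) z / F D π i z)
  else 1

noncomputable def W (j : ℕ) (z : Pt n) : ℝ := ∏ i ∈ Ico j n, Wfac φ D π z i

lemma Wfac_nonneg (hD : IsDistribution D) (z : Pt n) (i : ℕ) : 0 ≤ Wfac φ D π z i := by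
  rw [Wfac]
  split
  · split
    · norm_num
    · have := F_pos D π hD i z
      have := F_nonneg D π hD (i+1) z
      positivity
  · norm_num

lemma W_nonneg (hD : IsDistribution D) (j : ℕ) (z : Pt n) : 0 ≤ W φ D π j z :=
  prod_nonneg (fun i _ => Wfac_nonneg φ D π hD z i)

open Classical in
lemma kraft (hD : IsDistribution D) (hL : LogLipschitz α D) (hα : 1 ≤ α) :
    ∀ t : ℕ, t ≤ n → ∀ y : Pt n,
      ∑ z ∈ (Zset φ).filter (fun z => Ag π (n - t) y z), W φ D π (n - t) z ≤ 1 := by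
  intro t
  induction t with
  | zero =>
    intro _ y
    simp only [Nat.sub_zero]
    have hsub : (Zset φ).filter (fun z => Ag π n y z) ⊆ {y} := by
      intro z hz
      simp only [mem_filter] at hz
      have : z = y := funext fun u => hz.2 u (π u).isLt
      simp [this]
    rcases Finset.subset_singleton_iff.mp hsub with h | h
    · rw [h]; norm_num
    · rw [h, sum_singleton, W, Ico_self, prod_empty]
  | succ t ih =>
    intro ht y
    have hn : 0 < n := by omega
    set j := n - (t+1) with hjdef
    have hj : j < n := by omega
    have hjt : n - t = j + 1 := by omega
    set w := π.symm ⟨j, hj⟩ with hwdef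
    have hπw : (π w : ℕ) = j := by rw [hwdef]; simp
    have ihy : ∀ y' : Pt n,
        ∑ z ∈ (Zset φ).filter (fun z => Ag π (j+1) y' z), W φ D π (j+1) z ≤ 1 := by
      intro y'
      have := ih (by omega) y'
      rwa [hjt] at this
    -- expand W
    have hWexp : ∀ z : Pt n, W φ D π j z = Wfac φ D π z j * W φ D π (j+1) z := by
      intro z
      rw [W, W, prod_eq_prod_Ico_succ_bot hj]
    have hupdAg : ∀ (b : Bool) (z : Pt n),
        Ag π (j+1) (Function.update y w b) z ↔ (Ag π j y z ∧ z w = b) := by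
      intro b z
      rw [Ag_succ π hj, ← hwdef, Ag_update_off π (le_of_eq hπw.symm)]
      simp [Function.update]
    by_cases hF : Fcd φ π j w y
    · -- forced case
      obtain ⟨b, hb⟩ : ∃ b, Fd φ π j w y b := by
        rcases hF with h | h
        · exact ⟨true, h⟩
        · exact ⟨false, h⟩
      have hset : (Zset φ).filter (fun z => Ag π j y z)
          = (Zset φ).filter (fun z => Ag π (j+1) (Function.update y w b) z) := by
        ext z
        simp only [mem_filter, and_congr_right_iff]
        intro hzZ
        rw [hupdAg b z]
        constructor
        · intro hAg
          refine ⟨hAg, ?_⟩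
          have hFd : Fd φ π j w z b := (Fd_congr φ π hAg b).mpr hb
          exact Fd_forces φ π ((mem_Zset φ).mp hzZ) hFd
        · rintro ⟨hAg, _⟩
          exact hAg
      calc ∑ z ∈ (Zset φ).filter (fun z => Ag π j y z), W φ D π j z
          = ∑ z ∈ (Zset φ).filter (fun z => Ag π (j+1) (Function.update y w b) z),
              W φ D π j z := by rw [hset]
        _ = ∑ z ∈ (Zset φ).filter (fun z => Ag π (j+1) (Function.update y w b) z),
              W φ D π (j+1) z := by
              apply sum_congr rfl
              intro z hz
              simp only [mem_filter] at hz
              have hAg : Ag π j y z := ((hupdAg b z).mp hz.2).1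
              have hFcdz : Fcd φ π j w z := (Fcd_congr φ π hAg).mpr hF
              rw [hWexp z, Wfac, dif_pos hj, ← hwdef, if_pos hFcdz, one_mul]
        _ ≤ 1 := ihy _
    · -- unforced case
      have hFjy : 0 < F D π j y := F_pos D π hD j y
      have hsummand : ∀ z ∈ (Zset φ).filter (fun z => Ag π j y z),
          W φ D π j z = (F D π (j+1) z / F D π j y) * W φ D π (j+1) z := by
        intro z hz
        simp only [mem_filter] at hz
        have hAg : Ag π j y z := hz.2
        have hFcdz : ¬ Fcd φ π j w z := fun hc => hF ((Fcd_congr φ π hAg).mp hc)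
        rw [hWexp z, Wfac, dif_pos hj, ← hwdef, if_neg hFcdz, ← F_congr D π hAg]
      rw [sum_congr rfl hsummand]
      rw [← sum_filter_add_sum_filter_not ((Zset φ).filter (fun z => Ag π j y z))
        (fun z => z w = true)]
      have hsub : ∀ b : Bool,
          ∑ z ∈ ((Zset φ).filter (fun z => Ag π j y z)).filter (fun z => z w = b),
            (F D π (j+1) z / F D π j y) * W φ D π (j+1) z
          ≤ F D π (j+1) (Function.update y w b) / F D π j y := by
        intro b
        have hsetb : ((Zset φ).filter (fun z => Ag π j y z)).filter (fun z => z w = b)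
            = (Zset φ).filter (fun z => Ag π (j+1) (Function.update y w b) z) := by
          rw [filter_filter]
          ext z
          simp only [mem_filter, and_congr_right_iff]
          intro _
          rw [hupdAg b z]
        rw [hsetb]
        have hcongrF : ∀ z ∈ (Zset φ).filter (fun z => Ag π (j+1)
            (Function.update y w b) z),
            (F D π (j+1) z / F D π j y) * W φ D π (j+1) z
              = (F D π (j+1) (Function.update y w b) / F D π j y) * W φ D π (j+1) z := by
          intro z hz
          simp only [mem_filter] at hz
          have : F D π (j+1) (Function.update y w b) = F D π (j+1) z :=
            F_congr D π hz.2
          rw [this]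
        rw [sum_congr rfl hcongrF, ← mul_sum]
        have hrat : 0 ≤ F D π (j+1) (Function.update y w b) / F D π j y := by
          have := F_nonneg D π hD (j+1) (Function.update y w b)
          positivity
        calc (F D π (j+1) (Function.update y w b) / F D π j y)
              * ∑ z ∈ (Zset φ).filter (fun z => Ag π (j+1) (Function.update y w b) z),
                  W φ D π (j+1) z
            ≤ (F D π (j+1) (Function.update y w b) / F D π j y) * 1 :=
              mul_le_mul_of_nonneg_left (ihy _) hrat
          _ = F D π (j+1) (Function.update y w b) / F D π j y := mul_one _
      have hfalse : ∀ z : Pt n, (¬ z w = true) ↔ z w = false := by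
        intro z; cases h : z w <;> simp
      have h2 : ∑ z ∈ ((Zset φ).filter (fun z => Ag π j y z)).filter
            (fun z => ¬ z w = true),
            (F D π (j+1) z / F D π j y) * W φ D π (j+1) z
          ≤ F D π (j+1) (Function.update y w false) / F D π j y := by
        have : ((Zset φ).filter (fun z => Ag π j y z)).filter (fun z => ¬ z w = true)
            = ((Zset φ).filter (fun z => Ag π j y z)).filter (fun z => z w = false) := by
          apply filter_congr
          intro z _
          simp only [hfalse z]
        rw [this]
        exact hsub false
      calc ∑ z ∈ ((Zset φ).filter (fun z => Ag π j y z)).filter (fun z => z w = true),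
              (F D π (j+1) z / F D π j y) * W φ D π (j+1) z
            + ∑ z ∈ ((Zset φ).filter (fun z => Ag π j y z)).filter (fun z => ¬ z w = true),
              (F D π (j+1) z / F D π j y) * W φ D π (j+1) z
          ≤ F D π (j+1) (Function.update y w true) / F D π j y
            + F D π (j+1) (Function.update y w false) / F D π j y :=
            add_le_add (hsub true) h2
        _ = 1 := by
            rw [← add_div, hwdef, ← F_split D π hj y]
            exact div_self (ne_of_gt hFjy)

/-- coordinate revealed at position i is forced -/
def PredF (z : Pt n) (i : ℕ) : Prop := ∃ h : i < n, Fcd φ π i (π.symm ⟨i, h⟩) z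

open Classical in
noncomputable def fcount (z : Pt n) : ℕ := ((range n).filter (PredF φ π z)).card

/-- v is π-last among the variables of its critical clause -/
def lastP (z : Pt n) (v : Fin n) : Prop :=
  ∀ u ∈ clauseVars (cC φ z v), u ≠ v → (π u : ℕ) < (π v : ℕ)

open Classical in
noncomputable def scount (z : Pt n) : ℕ := ((crit φ z).filter (lastP φ π z)).card

open Classical in
lemma D_mul_pow_le_W0 (hD : IsDistribution D) (hL : LogLipschitz α D) (hα : 1 ≤ α)
    (z : Pt n) : D z * ((1 + α)/α) ^ (fcount φ π z) ≤ W φ D π 0 z := by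
  have hax : (0:ℝ) < α := lt_of_lt_of_le one_pos hα
  have h1α : (0:ℝ) < 1 + α := by linarith
  have hratio_le : ∀ i ∈ (range n).filter (PredF φ π z),
      F D π (i+1) z / F D π i z ≤ α / (1 + α) := by
    intro i hi
    simp only [mem_filter, mem_range] at hi
    obtain ⟨hin, _⟩ := hi
    have hc := F_cond_le D π hD hL hα hin z (z (π.symm ⟨i, hin⟩))
    rw [Function.update_eq_self] at hc
    rw [div_le_div_iff₀ (F_pos D π hD i z) h1α]
    linarith
  have hratio_nonneg : ∀ i : ℕ, 0 ≤ F D π (i+1) z / F D π i z := by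
    intro i
    have h1 := F_pos D π hD i z
    have h2 := F_nonneg D π hD (i+1) z
    positivity
  have htel := F_telescope D π hD z
  have hWfac_one : ∀ i ∈ (range n).filter (PredF φ π z), Wfac φ D π z i = 1 := by
    intro i hi
    simp only [mem_filter, mem_range] at hi
    obtain ⟨hin, h', hFcd⟩ := hi
    rw [Wfac, dif_pos hin, if_pos hFcd]
  have hWfac_ratio : ∀ i ∈ (range n).filter (fun i => ¬ PredF φ π z i),
      Wfac φ D π z i = F D π (i+1) z / F D π i z := by
    intro i hi
    simp only [mem_filter, mem_range] at hi
    obtain ⟨hin, hP⟩ := hi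
    rw [Wfac, dif_pos hin, if_neg]
    intro hc
    exact hP ⟨hin, hc⟩
  have hW0 : W φ D π 0 z
      = ∏ i ∈ (range n).filter (fun i => ¬ PredF φ π z i), (F D π (i+1) z / F D π i z) := by
    rw [W, ← range_eq_Ico,
      ← prod_filter_mul_prod_filter_not (range n) (PredF φ π z) (Wfac φ D π z),
      prod_eq_one hWfac_one, one_mul]
    exact prod_congr rfl hWfac_ratio
  have hD_eq : D z = (∏ i ∈ (range n).filter (PredF φ π z), (F D π (i+1) z / F D π i z))
      * W φ D π 0 z := by
    rw [hW0, ← htel,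
      ← prod_filter_mul_prod_filter_not (range n) (PredF φ π z)
        (fun i => F D π (i+1) z / F D π i z)]
  have hprod_le : ∏ i ∈ (range n).filter (PredF φ π z), (F D π (i+1) z / F D π i z)
      ≤ (α/(1+α)) ^ (fcount φ π z) := by
    rw [fcount, ← prod_const]
    exact prod_le_prod (fun i _ => hratio_nonneg i) hratio_le
  have hW0_nonneg : 0 ≤ W φ D π 0 z := W_nonneg φ D π hD 0 z
  have hDle : D z ≤ (α/(1+α)) ^ (fcount φ π z) * W φ D π 0 z := by
    rw [hD_eq]
    exact mul_le_mul_of_nonneg_right hprod_le hW0_nonneg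
  have hβpow : (0:ℝ) ≤ ((1+α)/α) ^ (fcount φ π z) := by positivity
  calc D z * ((1+α)/α) ^ (fcount φ π z)
      ≤ ((α/(1+α)) ^ (fcount φ π z) * W φ D π 0 z) * ((1+α)/α) ^ (fcount φ π z) :=
        mul_le_mul_of_nonneg_right hDle hβpow
    _ = ((α/(1+α)) * ((1+α)/α)) ^ (fcount φ π z) * W φ D π 0 z := by
        rw [mul_pow]; ring
    _ = W φ D π 0 z := by
        rw [div_mul_div_comm, mul_comm α (1+α), div_self (by positivity), one_pow, one_mul]

open Classical in
lemma sum_D_pow_fcount_le_one (hD : IsDistribution D) (hL : LogLipschitz α D) (hα : 1 ≤ α) :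
    ∑ z ∈ Zset φ, D z * ((1+α)/α) ^ (fcount φ π z) ≤ 1 := by
  have hk := kraft φ D π hD hL hα n (le_refl n) (fun _ => true)
  simp only [Nat.sub_self] at hk
  have hfilter : (Zset φ).filter (fun z => Ag π 0 (fun _ => true) z) = Zset φ :=
    filter_true_of_mem (fun z _ => Ag_zero π _ z)
  rw [hfilter] at hk
  refine le_trans (sum_le_sum (fun z _ => D_mul_pow_le_W0 φ D π hD hL hα z)) hk

open Classical in
lemma scount_le_fcount {z : Pt n} (hz : SatCNF φ z) :
    scount φ π z ≤ fcount φ π z := by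
  rw [scount, fcount]
  apply card_le_card_of_injOn (fun v => (π v : ℕ))
  · intro v hv
    simp only [Finset.mem_coe, mem_filter] at hv ⊢
    obtain ⟨hvc, hlast⟩ := hv
    have hvcrit : v ∈ crit φ z := hvc
    refine ⟨mem_range.mpr (π v).isLt, (π v).isLt, ?_⟩
    have hsymm : π.symm ⟨((π v : ℕ)), (π v).isLt⟩ = v := by
      simp [Fin.eta]
    rw [hsymm]
    have hFd : Fd φ π (π v) v z (z v) := by
      obtain ⟨hCmem, hvlit, hoth, hself⟩ := cC_props φ hz hvcrit
      exact ⟨cC φ z v, hCmem, hvlit,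
        fun l hl hlw => ⟨hlast l.1 (mem_clauseVars_of_mem hl) hlw, hoth l hl hlw⟩, hself⟩
    rw [Fcd]
    cases hb : z v
    · right; rwa [hb] at hFd
    · left; rwa [hb] at hFd
  · intro v hv v' hv' he
    simp only at he
    exact π.injective (Fin.val_injective he)

open Classical in
lemma per_perm (hD : IsDistribution D) (hL : LogLipschitz α D) (hα : 1 ≤ α) :
    ∑ z ∈ Zset φ, D z * ((1+α)/α) ^ (scount φ π z) ≤ 1 := by
  have hax : (0:ℝ) < α := lt_of_lt_of_le one_pos hα
  have hβ1 : (1:ℝ) ≤ (1+α)/α := by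
    rw [le_div_iff₀ hax]; linarith
  refine le_trans (sum_le_sum (fun z hz => ?_)) (sum_D_pow_fcount_le_one φ D π hD hL hα)
  have hzS := (mem_Zset φ).mp hz
  have hmono : ((1+α)/α) ^ (scount φ π z) ≤ ((1+α)/α) ^ (fcount φ π z) :=
    pow_le_pow_right₀ hβ1 (scount_le_fcount φ π hzS)
  exact mul_le_mul_of_nonneg_left hmono (le_of_lt (hD.1 z))

end PPZ

section Perms
variable (φ : CNF n) (D : Pt n → ℝ) {α : ℝ} {k : ℕ}

open Classical in
/-- permutations for which v is the last variable of T -/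
noncomputable def lastPerms (T : Finset (Fin n)) (v : Fin n) :
    Finset (Equiv.Perm (Fin n)) :=
  univ.filter (fun π => ∀ u ∈ T, u ≠ v → (π u : ℕ) < (π v : ℕ))

open Classical in
lemma lastPerms_card_eq {T : Finset (Fin n)} {v v' : Fin n} (hv : v ∈ T) (hv' : v' ∈ T) :
    (lastPerms T v).card = (lastPerms T v').card := by
  by_cases hvv : v = v'
  · rw [hvv]
  · apply card_bij' (fun π _ => π * Equiv.swap v v') (fun π _ => π * Equiv.swap v v')
    · intro π hπ
      simp only [lastPerms, mem_filter, mem_univ, true_and] at hπ ⊢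
      intro u hu huv'
      rw [Equiv.Perm.mul_apply, Equiv.Perm.mul_apply, Equiv.swap_apply_right]
      by_cases huv : u = v
      · subst huv
        rw [Equiv.swap_apply_left]
        exact hπ v' hv' (fun h => hvv h.symm)
      · rw [Equiv.swap_apply_of_ne_of_ne huv huv']
        exact hπ u hu huv
    · intro π hπ
      simp only [lastPerms, mem_filter, mem_univ, true_and] at hπ ⊢
      intro u hu huv
      rw [Equiv.Perm.mul_apply, Equiv.Perm.mul_apply, Equiv.swap_apply_left]
      by_cases huv' : u = v'
      · subst huv'
        rw [Equiv.swap_apply_right]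
        exact hπ v hv hvv
      · rw [Equiv.swap_apply_of_ne_of_ne huv huv']
        exact hπ u hu huv'
    · intro π _
      rw [mul_assoc, Equiv.swap_mul_self, mul_one]
    · intro π _
      rw [mul_assoc, Equiv.swap_mul_self, mul_one]

open Classical in
lemma lastPerms_cover {T : Finset (Fin n)} (hT : T.Nonempty) :
    (univ : Finset (Equiv.Perm (Fin n))) = T.biUnion (lastPerms T) := by
  apply Finset.ext
  intro π
  simp only [mem_univ, true_iff, mem_biUnion]
  obtain ⟨x, hx, hmax⟩ := exists_max_image T (fun u => (π u : ℕ)) hT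
  refine ⟨x, hx, ?_⟩
  simp only [lastPerms, mem_filter, mem_univ, true_and]
  intro u hu hux
  have hle := hmax u hu
  have hne : (π u : ℕ) ≠ (π x : ℕ) := by
    intro he
    exact hux (π.injective (Fin.val_injective he))
  omega

open Classical in
lemma lastPerms_card_mul {T : Finset (Fin n)} {v : Fin n} (hv : v ∈ T) :
    (lastPerms T v).card * T.card = (univ : Finset (Equiv.Perm (Fin n))).card := by
  have hdisj : ∀ u ∈ T, ∀ u' ∈ T, u ≠ u' → Disjoint (lastPerms T u) (lastPerms T u') := by
    intro u hu u' hu' huu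
    rw [Finset.disjoint_left]
    intro π hπ hπ'
    simp only [lastPerms, mem_filter, mem_univ, true_and] at hπ hπ'
    have h1 := hπ u' hu' (fun h => huu h.symm)
    have h2 := hπ' u hu huu
    omega
  have hcard : (univ : Finset (Equiv.Perm (Fin n))).card
      = ∑ u ∈ T, (lastPerms T u).card := by
    rw [lastPerms_cover ⟨v, hv⟩, card_biUnion hdisj]
  rw [hcard]
  have : ∀ u ∈ T, (lastPerms T u).card = (lastPerms T v).card := by
    intro u hu
    exact lastPerms_card_eq hu hv
  rw [sum_congr rfl this, sum_const, smul_eq_mul, mul_comm]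

open Classical in
lemma sum_perm_scount (hφ : IsKCNF k φ) {z : Pt n} (hz : SatCNF φ z) :
    (univ : Finset (Equiv.Perm (Fin n))).card * (crit φ z).card
      ≤ k * ∑ π ∈ (univ : Finset (Equiv.Perm (Fin n))), scount φ π z := by
  have hswap : ∑ π ∈ (univ : Finset (Equiv.Perm (Fin n))), scount φ π z
      = ∑ v ∈ crit φ z, ((univ : Finset (Equiv.Perm (Fin n))).filter
          (fun π => lastP φ π z v)).card := by
    have h1 : ∀ π : Equiv.Perm (Fin n), scount φ π z
        = ∑ v ∈ crit φ z, (if lastP φ π z v then 1 else 0) := by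
      intro π
      rw [scount, card_filter]
    rw [sum_congr rfl (fun π _ => h1 π), sum_comm]
    apply sum_congr rfl
    intro v _
    rw [card_filter]
  rw [hswap, mul_sum]
  have hperv : ∀ v ∈ crit φ z,
      (univ : Finset (Equiv.Perm (Fin n))).card
        ≤ k * ((univ : Finset (Equiv.Perm (Fin n))).filter (fun π => lastP φ π z v)).card := by
    intro v hv
    have hvT : v ∈ clauseVars (cC φ z v) := by
      have := (cC_props φ hz hv).2.1
      exact mem_clauseVars_of_mem this
    have hTk : (clauseVars (cC φ z v)).card ≤ k := cC_vars_card φ hφ hz hv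
    have hcount := lastPerms_card_mul (T := clauseVars (cC φ z v)) hvT
    have heq : (univ : Finset (Equiv.Perm (Fin n))).filter (fun π => lastP φ π z v)
        = lastPerms (clauseVars (cC φ z v)) v := by
      apply filter_congr
      intro π _
      unfold lastP
      exact Iff.rfl
    rw [heq, ← hcount]
    calc (lastPerms (clauseVars (cC φ z v)) v).card * (clauseVars (cC φ z v)).card
        ≤ (lastPerms (clauseVars (cC φ z v)) v).card * k :=
          Nat.mul_le_mul_left _ hTk
      _ = k * (lastPerms (clauseVars (cC φ z v)) v).card := Nat.mul_comm _ _
  calc (univ : Finset (Equiv.Perm (Fin n))).card * (crit φ z).card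
      = ∑ _v ∈ crit φ z, (univ : Finset (Equiv.Perm (Fin n))).card := by
        rw [sum_const, smul_eq_mul, mul_comm]
    _ ≤ ∑ v ∈ crit φ z, k * ((univ : Finset (Equiv.Perm (Fin n))).filter
          (fun π => lastP φ π z v)).card := sum_le_sum hperv

end Perms

section PPZmain
variable (φ : CNF n) (D : Pt n → ℝ) {α : ℝ} {k : ℕ}

noncomputable def lam (α : ℝ) (k : ℕ) : ℝ := Real.exp (Real.log ((1+α)/α) / k)

lemma lam_pos (α : ℝ) (k : ℕ) : 0 < lam α k := Real.exp_pos _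

lemma one_lt_lam (hα : 1 ≤ α) (hk : 1 ≤ k) : 1 < lam α k := by
  have hax : (0:ℝ) < α := lt_of_lt_of_le one_pos hα
  have hβ1 : (1:ℝ) < (1+α)/α := by
    rw [lt_div_iff₀ hax]; linarith
  have hlog : 0 < Real.log ((1+α)/α) := Real.log_pos hβ1
  have hkpos : (0:ℝ) < (k:ℝ) := by exact_mod_cast hk
  rw [lam]
  have h := Real.exp_lt_exp.mpr (div_pos hlog hkpos)
  rwa [Real.exp_zero] at h

lemma lam_le_two (hα : 1 ≤ α) (hk : 1 ≤ k) : lam α k ≤ 2 := by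
  have hax : (0:ℝ) < α := lt_of_lt_of_le one_pos hα
  have hβpos : (0:ℝ) < (1+α)/α := by positivity
  have hβ2 : (1+α)/α ≤ 2 := by
    rw [div_le_iff₀ hax]; linarith
  have hL0 : 0 ≤ Real.log ((1+α)/α) := by
    apply Real.log_nonneg
    rw [le_div_iff₀ hax]; linarith
  have hk1 : (1:ℝ) ≤ (k:ℝ) := by exact_mod_cast hk
  calc lam α k = Real.exp (Real.log ((1+α)/α) / k) := rfl
    _ ≤ Real.exp (Real.log ((1+α)/α)) := by
        apply Real.exp_le_exp.mpr
        apply div_le_self hL0 hk1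
    _ = (1+α)/α := Real.exp_log hβpos
    _ ≤ 2 := hβ2

open Classical in
theorem ppz (hφ : IsKCNF k φ) (hk : 1 ≤ k) (hD : IsDistribution D)
    (hL : LogLipschitz α D) (hα : 1 ≤ α) :
    ∑ z ∈ Zset φ, D z * (lam α k) ^ ((crit φ z).card) ≤ 1 := by
  classical
  have hax : (0:ℝ) < α := lt_of_lt_of_le one_pos hα
  set β : ℝ := (1+α)/α with hβdef
  have hβpos : 0 < β := by rw [hβdef]; positivity
  have hβ1 : (1:ℝ) ≤ β := by rw [hβdef, le_div_iff₀ hax]; linarith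
  set L : ℝ := Real.log β with hLdef
  have hL0 : 0 ≤ L := Real.log_nonneg hβ1
  have hkpos : (0:ℝ) < (k:ℝ) := by exact_mod_cast hk
  set N := (univ : Finset (Equiv.Perm (Fin n))).card with hNdef
  have hN : 0 < N := Finset.card_pos.mpr ⟨1, mem_univ 1⟩
  have hNR : (0:ℝ) < (N:ℝ) := by exact_mod_cast hN
  have hsum : ∑ z ∈ Zset φ, ∑ π ∈ (univ : Finset (Equiv.Perm (Fin n))),
      D z * β ^ (scount φ π z) ≤ (N:ℝ) := by
    rw [sum_comm]
    calc ∑ π ∈ (univ : Finset (Equiv.Perm (Fin n))), ∑ z ∈ Zset φ, D z * β ^ (scount φ π z)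
        ≤ ∑ _π ∈ (univ : Finset (Equiv.Perm (Fin n))), (1:ℝ) :=
          sum_le_sum (fun π _ => per_perm φ D π hD hL hα)
      _ = (N:ℝ) := by rw [sum_const, nsmul_eq_mul, mul_one]
  have hz_lower : ∀ z ∈ Zset φ, (N:ℝ) * (D z * (lam α k) ^ ((crit φ z).card))
      ≤ ∑ π ∈ (univ : Finset (Equiv.Perm (Fin n))), D z * β ^ (scount φ π z) := by
    intro z hz
    have hzS := (mem_Zset φ).mp hz
    have hDz : 0 ≤ D z := le_of_lt (hD.1 z)
    set c : ℝ := ((crit φ z).card : ℝ) with hcdef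
    have hc0 : 0 ≤ c := by rw [hcdef]; positivity
    set S : ℝ := ∑ π ∈ (univ : Finset (Equiv.Perm (Fin n))), ((scount φ π z : ℕ) : ℝ)
      with hSdef
    have hcountR : (N:ℝ) * c ≤ (k:ℝ) * S := by
      rw [hSdef, hcdef, hNdef]
      exact_mod_cast sum_perm_scount φ hφ hzS
    set m : ℝ := S * L / N with hmdef
    have hNm : (N:ℝ) * m = S * L := by
      rw [hmdef]
      field_simp
    have hβpow : ∀ π : Equiv.Perm (Fin n),
        β ^ (scount φ π z) = Real.exp ((scount φ π z : ℝ) * L) := by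
      intro π
      rw [Real.exp_nat_mul, hLdef, Real.exp_log hβpos]
    have htangent : (N:ℝ) * Real.exp m
        ≤ ∑ π ∈ (univ : Finset (Equiv.Perm (Fin n))),
            Real.exp ((scount φ π z : ℝ) * L) := by
      have h1 : ∀ π ∈ (univ : Finset (Equiv.Perm (Fin n))),
          Real.exp m * (1 + ((scount φ π z : ℝ) * L - m))
            ≤ Real.exp ((scount φ π z : ℝ) * L) := by
        intro π _
        have h2 := Real.add_one_le_exp ((scount φ π z : ℝ) * L - m)
        have h3 : Real.exp m * (((scount φ π z : ℝ) * L - m) + 1)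
            ≤ Real.exp m * Real.exp ((scount φ π z : ℝ) * L - m) :=
          mul_le_mul_of_nonneg_left h2 (le_of_lt (Real.exp_pos m))
        rw [← Real.exp_add] at h3
        have h4 : m + ((scount φ π z : ℝ) * L - m) = (scount φ π z : ℝ) * L := by ring
        rw [h4] at h3
        calc Real.exp m * (1 + ((scount φ π z : ℝ) * L - m))
            = Real.exp m * (((scount φ π z : ℝ) * L - m) + 1) := by ring
          _ ≤ _ := h3
      calc (N:ℝ) * Real.exp m
          = ∑ π ∈ (univ : Finset (Equiv.Perm (Fin n))),
              Real.exp m * (1 + ((scount φ π z : ℝ) * L - m)) := by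
            rw [← mul_sum]
            have hsum1 : ∑ π ∈ (univ : Finset (Equiv.Perm (Fin n))),
                (1 + ((scount φ π z : ℝ) * L - m)) = (N:ℝ) := by
              rw [sum_add_distrib, sum_const, nsmul_eq_mul, mul_one, sum_sub_distrib,
                sum_const, nsmul_eq_mul, ← sum_mul]
              rw [← hSdef, ← hNm]
              ring
            rw [hsum1]
            ring
        _ ≤ _ := sum_le_sum h1
    have hm_ge : c * L / k ≤ m := by
      rw [hmdef, div_le_div_iff₀ hkpos hNR]
      nlinarith
    have hlam_pow : (lam α k) ^ ((crit φ z).card) = Real.exp (c * L / k) := by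
      rw [lam, ← Real.exp_nat_mul, ← hcdef, ← hLdef]
      congr 1
      ring
    calc (N:ℝ) * (D z * (lam α k) ^ ((crit φ z).card))
        = D z * ((N:ℝ) * Real.exp (c * L / k)) := by rw [hlam_pow]; ring
      _ ≤ D z * ((N:ℝ) * Real.exp m) := by
          apply mul_le_mul_of_nonneg_left _ hDz
          apply mul_le_mul_of_nonneg_left _ (le_of_lt hNR)
          exact Real.exp_le_exp.mpr hm_ge
      _ ≤ D z * ∑ π ∈ (univ : Finset (Equiv.Perm (Fin n))),
            Real.exp ((scount φ π z : ℝ) * L) :=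
          mul_le_mul_of_nonneg_left htangent hDz
      _ = ∑ π ∈ (univ : Finset (Equiv.Perm (Fin n))), D z * β ^ (scount φ π z) := by
          rw [mul_sum]
          exact sum_congr rfl (fun π _ => by rw [hβpow π])
  have hfinal : (N:ℝ) * (∑ z ∈ Zset φ, D z * (lam α k) ^ ((crit φ z).card)) ≤ (N:ℝ) * 1 := by
    rw [mul_sum, mul_one]
    exact le_trans (sum_le_sum hz_lower) hsum
  exact le_of_mul_le_mul_left hfinal hNR

end PPZmain

section Near
variable (φ : CNF n) (D : Pt n → ℝ) {α : ℝ} {k : ℕ}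

open Classical in
noncomputable def Bset (R : ℕ) : Finset (Pt n) :=
  univ.filter (fun x => ∃ z, hammingDist x z ≤ R ∧ SatCNF φ z)

open Classical in
lemma mem_Bset {R : ℕ} {x : Pt n} :
    x ∈ Bset φ R ↔ ∃ z, hammingDist x z ≤ R ∧ SatCNF φ z := by
  simp [Bset]

open Classical in
/-- a canonical nearest satisfying point -/
noncomputable def near (x : Pt n) : Pt n :=
  if h : ∃ z, z ∈ Zset φ ∧ ∀ z' ∈ Zset φ, hammingDist x z ≤ hammingDist x z' then
    h.choose else x

open Classical in
lemma near_spec {R : ℕ} {x : Pt n} (hx : x ∈ Bset φ R) :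
    near φ x ∈ Zset φ ∧ (∀ z' ∈ Zset φ, hammingDist x (near φ x) ≤ hammingDist x z')
      ∧ hammingDist x (near φ x) ≤ R := by
  obtain ⟨z₀, hd₀, hs₀⟩ := (mem_Bset φ).mp hx
  have hz₀ : z₀ ∈ Zset φ := (mem_Zset φ).mpr hs₀
  have hne : ∃ z, z ∈ Zset φ ∧ ∀ z' ∈ Zset φ, hammingDist x z ≤ hammingDist x z' := by
    obtain ⟨z, hz, hmin⟩ := exists_min_image (Zset φ) (hammingDist x) ⟨z₀, hz₀⟩
    exact ⟨z, hz, hmin⟩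
  rw [near, dif_pos hne]
  obtain ⟨h1, h2⟩ := hne.choose_spec
  exact ⟨h1, h2, le_trans (h2 z₀ hz₀) hd₀⟩

open Classical in
lemma near_crit_sub {R : ℕ} {x : Pt n} (hx : x ∈ Bset φ R) :
    DF x (near φ x) ⊆ crit φ (near φ x) := by
  obtain ⟨hZ, hmin, _⟩ := near_spec φ hx
  intro v hv
  rw [mem_crit]
  intro hsat
  have hmem : flip (near φ x) v ∈ Zset φ := (mem_Zset φ).mpr hsat
  have hlt : hammingDist x (flip (near φ x) v) < hammingDist x (near φ x) := by
    rw [hd_card, hd_card, DF_flip x (near φ x) hv, card_erase_of_mem hv]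
    have hpos : 0 < (DF x (near φ x)).card := card_pos.mpr ⟨v, hv⟩
    omega
  exact absurd (hmin _ hmem) (not_le.mpr hlt)

end Near

section Key
variable (φ : CNF n) (D : Pt n → ℝ) {α : ℝ} {k : ℕ}

lemma choose_bound {lm : ℝ} (h1 : 1 < lm) (h2 : lm ≤ 2) (c j m : ℕ) (hj : j ≤ m) :
    (c.choose j : ℝ) * (lm - 1)^m ≤ lm ^ c := by
  have h0 : (0:ℝ) ≤ lm - 1 := by linarith
  have hle1 : lm - 1 ≤ 1 := by linarith
  have hsplit : (lm-1)^m = (lm-1)^j * (lm-1)^(m-j) := by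
    rw [← pow_add]; congr 1; omega
  have hb : (lm-1)^(m-j) ≤ 1 := pow_le_one₀ h0 hle1
  have hmain : (c.choose j : ℝ) * (lm - 1)^j ≤ lm ^ c := by
    by_cases hjc : j ≤ c
    · have hexp : lm ^ c = ((lm - 1) + 1)^c := by norm_num
      rw [hexp, add_pow]
      have hjr : j ∈ range (c+1) := mem_range.mpr (by omega)
      have hterm : (c.choose j : ℝ) * (lm - 1)^j
          = (lm-1)^j * (1:ℝ)^(c-j) * (c.choose j : ℝ) := by
        rw [one_pow]; ring
      rw [hterm]
      apply single_le_sum (f := fun i => (lm-1)^i * (1:ℝ)^(c-i) * (c.choose i : ℝ)) _ hjr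
      intro i _
      have : (0:ℝ) ≤ (lm-1)^i := pow_nonneg h0 i
      positivity
    · have hz : c.choose j = 0 := Nat.choose_eq_zero_of_lt (by omega)
      rw [hz]
      have : (0:ℝ) ≤ lm ^ c := by positivity
      simpa using this
  calc (c.choose j:ℝ)*(lm-1)^m = ((c.choose j:ℝ)*(lm-1)^j)*(lm-1)^(m-j) := by
        rw [hsplit]; ring
    _ ≤ lm^c * 1 := by
        apply mul_le_mul hmain hb (pow_nonneg h0 _)
        positivity
    _ = lm^c := mul_one _

open Classical in
lemma Pcard_le (z : Pt n) (R : ℕ) :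
    (((crit φ z).powerset).filter (fun U => U.card ≤ 2*R)).card
      ≤ ∑ j ∈ range (2*R+1), ((crit φ z).card).choose j := by
  have hsub : ((crit φ z).powerset).filter (fun U => U.card ≤ 2*R)
      ⊆ (range (2*R+1)).biUnion (fun j => powersetCard j (crit φ z)) := by
    intro U hU
    simp only [mem_filter, mem_powerset] at hU
    rw [mem_biUnion]
    exact ⟨U.card, mem_range.mpr (by omega), mem_powersetCard.mpr ⟨hU.1, rfl⟩⟩
  calc (((crit φ z).powerset).filter (fun U => U.card ≤ 2*R)).card
      ≤ ((range (2*R+1)).biUnion (fun j => powersetCard j (crit φ z))).card :=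
        card_le_card hsub
    _ ≤ ∑ j ∈ range (2*R+1), (powersetCard j (crit φ z)).card := card_biUnion_le
    _ = ∑ j ∈ range (2*R+1), ((crit φ z).card).choose j := by
        apply sum_congr rfl
        intro j _
        rw [card_powersetCard]

open Classical in
lemma cell_sq_bound (hφ : IsKCNF k φ) (hk : 1 ≤ k) (hD : IsDistribution D)
    (hL : LogLipschitz α D) (hα : 1 ≤ α) (R : ℕ) {z : Pt n} (hz : z ∈ Zset φ) :
    (∑ x ∈ (Bset φ R).filter (fun x => near φ x = z), Real.sqrt (D x))^2
        * (lam α k - 1)^(2*R)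
      ≤ α^(3*R) * 16^R * (2*R+1) * (D z * (lam α k) ^ ((crit φ z).card)) := by
  have hax : (0:ℝ) < α := lt_of_lt_of_le one_pos hα
  have hlam1 : 1 < lam α k := one_lt_lam hα hk
  have hlam2 : lam α k ≤ 2 := lam_le_two hα hk
  set cell := (Bset φ R).filter (fun x => near φ x = z) with hcelldef
  have hcellfacts : ∀ x ∈ cell, near φ x = z ∧ hammingDist x z ≤ R ∧ DF x z ⊆ crit φ z := by
    intro x hx
    rw [hcelldef, mem_filter] at hx
    obtain ⟨hxB, hxz⟩ := hx
    have h1 := (near_spec φ hxB).2.2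
    have h2 := near_crit_sub φ hxB
    rw [hxz] at h1 h2
    exact ⟨hxz, h1, h2⟩
  set P := (((crit φ z).powerset).filter (fun U => U.card ≤ 2*R)) with hPdef
  -- step: pair expansion and pointwise bound
  have hpair : (∑ x ∈ cell, Real.sqrt (D x))^2
      ≤ α^R * ∑ q ∈ cell ×ˢ cell, D (flipS z ((DF q.1 z) ∪ (DF q.2 z))) := by
    rw [sq, sum_mul_sum, ← Finset.sum_product']
    rw [mul_sum]
    apply sum_le_sum
    intro q hq
    rw [mem_product] at hq
    obtain ⟨hq1, hq2⟩ := hq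
    obtain ⟨_, hd1, hc1⟩ := hcellfacts q.1 hq1
    obtain ⟨_, hd2, hc2⟩ := hcellfacts q.2 hq2
    set U := (DF q.1 z) ∪ (DF q.2 z) with hUdef
    set u := flipS z U with hudef
    have hDu : 0 ≤ D u := le_of_lt (hD.1 u)
    have hb1 : D q.1 ≤ α^R * D u := by
      have hq1e : q.1 = flipS z (DF q.1 z) := (flipS_DF q.1 z).symm
      have hdist : hammingDist q.1 u = (U \ (DF q.1 z)).card := by
        conv_lhs => rw [hq1e, hudef]
        rw [hd_card, DF_flipS_subset z (subset_union_left)]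
      have hle : (U \ (DF q.1 z)).card ≤ R := by
        have hsub2 : U \ (DF q.1 z) ⊆ DF q.2 z := by
          rw [hUdef]
          intro v hv
          rw [mem_sdiff, mem_union] at hv
          rcases hv.1 with h | h
          · exact absurd h hv.2
          · exact h
        calc (U \ (DF q.1 z)).card ≤ (DF q.2 z).card := card_le_card hsub2
          _ ≤ R := by rw [← hd_card]; exact hd2
      apply lip_pow_le hD hL hα
      omega
    have hb2 : D q.2 ≤ α^R * D u := by
      have hq2e : q.2 = flipS z (DF q.2 z) := (flipS_DF q.2 z).symm
      have hdist : hammingDist q.2 u = (U \ (DF q.2 z)).card := by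
        conv_lhs => rw [hq2e, hudef]
        rw [hd_card, DF_flipS_subset z (subset_union_right)]
      have hle : (U \ (DF q.2 z)).card ≤ R := by
        have hsub2 : U \ (DF q.2 z) ⊆ DF q.1 z := by
          rw [hUdef]
          intro v hv
          rw [mem_sdiff, mem_union] at hv
          rcases hv.1 with h | h
          · exact h
          · exact absurd h hv.2
        calc (U \ (DF q.2 z)).card ≤ (DF q.1 z).card := card_le_card hsub2
          _ ≤ R := by rw [← hd_card]; exact hd1
      apply lip_pow_le hD hL hα
      omega
    calc Real.sqrt (D q.1) * Real.sqrt (D q.2)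
        ≤ Real.sqrt (α^R * D u) * Real.sqrt (α^R * D u) := by
          apply mul_le_mul (Real.sqrt_le_sqrt hb1) (Real.sqrt_le_sqrt hb2)
            (Real.sqrt_nonneg _) (Real.sqrt_nonneg _)
      _ = α^R * D u := by
          rw [Real.mul_self_sqrt (by positivity)]
  -- step: regroup pairs by union
  have hregroup : ∑ q ∈ cell ×ˢ cell, D (flipS z ((DF q.1 z) ∪ (DF q.2 z)))
      ≤ 16^R * ∑ U ∈ P, D (flipS z U) := by
    set Fn : Pt n × Pt n → Finset (Fin n) := fun q => (DF q.1 z) ∪ (DF q.2 z) with hFndef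
    have hmaps : ∀ q ∈ cell ×ˢ cell, Fn q ∈ (cell ×ˢ cell).image Fn := by
      intro q hq
      exact mem_image_of_mem Fn hq
    rw [← sum_fiberwise_of_maps_to hmaps (fun q => D (flipS z (Fn q)))]
    have hinner : ∀ U ∈ (cell ×ˢ cell).image Fn,
        ∑ q ∈ (cell ×ˢ cell).filter (fun q => Fn q = U), D (flipS z (Fn q))
          = (((cell ×ˢ cell).filter (fun q => Fn q = U)).card : ℝ) * D (flipS z U) := by
      intro U hU
      have hcong : ∀ q ∈ (cell ×ˢ cell).filter (fun q => Fn q = U),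
          D (flipS z (Fn q)) = D (flipS z U) := by
        intro q hq
        rw [(mem_filter.mp hq).2]
      rw [sum_congr rfl hcong, sum_const, nsmul_eq_mul]
    rw [sum_congr rfl hinner]
    have himgP : (cell ×ˢ cell).image Fn ⊆ P := by
      intro U hU
      rw [mem_image] at hU
      obtain ⟨q, hq, hqU⟩ := hU
      rw [mem_product] at hq
      obtain ⟨_, _, hc1⟩ := hcellfacts q.1 hq.1
      obtain ⟨_, hd2, hc2⟩ := hcellfacts q.2 hq.2
      obtain ⟨_, hd1, _⟩ := hcellfacts q.1 hq.1
      rw [hPdef, mem_filter, mem_powerset, ← hqU, hFndef]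
      constructor
      · exact union_subset hc1 hc2
      · calc ((DF q.1 z) ∪ (DF q.2 z)).card ≤ (DF q.1 z).card + (DF q.2 z).card :=
              card_union_le _ _
          _ ≤ R + R := by
              apply add_le_add <;> rw [← hd_card] <;> [exact hd1; exact hd2]
          _ = 2*R := by omega
    have hfibcard : ∀ U ∈ (cell ×ˢ cell).image Fn,
        (((cell ×ˢ cell).filter (fun q => Fn q = U)).card : ℝ) ≤ 16^R := by
      intro U hU
      have hUP := himgP hU
      rw [hPdef, mem_filter, mem_powerset] at hUP
      have hinj : ((cell ×ˢ cell).filter (fun q => Fn q = U)).card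
          ≤ (U.powerset ×ˢ U.powerset).card := by
        apply card_le_card_of_injOn (fun q => ((DF q.1 z), (DF q.2 z)))
        · intro q hq
          rw [Finset.mem_coe, mem_filter] at hq
          rw [Finset.mem_coe, mem_product, mem_powerset, mem_powerset]
          rw [← hq.2, hFndef]
          exact ⟨subset_union_left, subset_union_right⟩
        · intro q hq q' hq' he
          simp only [Prod.mk.injEq] at he
          have h1 : q.1 = q'.1 := by
            rw [← flipS_DF q.1 z, ← flipS_DF q'.1 z, he.1]
          have h2 : q.2 = q'.2 := by
            rw [← flipS_DF q.2 z, ← flipS_DF q'.2 z, he.2]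
          exact Prod.ext h1 h2
      have hcard2 : (U.powerset ×ˢ U.powerset).card ≤ 16^R := by
        rw [card_product, card_powerset]
        calc 2 ^ U.card * 2 ^ U.card ≤ 2 ^ (2*R) * 2 ^ (2*R) := by
              apply Nat.mul_le_mul <;> exact Nat.pow_le_pow_right (by omega) hUP.2
          _ = 16^R := by
              rw [← pow_add]
              rw [show (16:ℕ) = 2^4 from rfl, ← pow_mul]
              congr 1
              omega
      calc (((cell ×ˢ cell).filter (fun q => Fn q = U)).card : ℝ)
          ≤ ((U.powerset ×ˢ U.powerset).card : ℝ) := by exact_mod_cast hinj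
        _ ≤ ((16^R : ℕ) : ℝ) := by exact_mod_cast hcard2
        _ = 16^R := by push_cast; ring
    calc ∑ U ∈ (cell ×ˢ cell).image Fn,
          (((cell ×ˢ cell).filter (fun q => Fn q = U)).card : ℝ) * D (flipS z U)
        ≤ ∑ U ∈ (cell ×ˢ cell).image Fn, 16^R * D (flipS z U) := by
          apply sum_le_sum
          intro U hU
          exact mul_le_mul_of_nonneg_right (hfibcard U hU) (le_of_lt (hD.1 _))
      _ = 16^R * ∑ U ∈ (cell ×ˢ cell).image Fn, D (flipS z U) := by rw [mul_sum]
      _ ≤ 16^R * ∑ U ∈ P, D (flipS z U) := by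
          apply mul_le_mul_of_nonneg_left _ (by positivity)
          apply sum_le_sum_of_subset_of_nonneg himgP
          intro U _ _
          exact le_of_lt (hD.1 _)
  -- step: bound the union sum by the cardinality
  have hPsum : ∑ U ∈ P, D (flipS z U) ≤ (P.card : ℝ) * (α^(2*R) * D z) := by
    calc ∑ U ∈ P, D (flipS z U) ≤ ∑ U ∈ P, α^(2*R) * D z := by
          apply sum_le_sum
          intro U hU
          rw [hPdef, mem_filter, mem_powerset] at hU
          apply lip_pow_le hD hL hα
          rw [hd_card, DF_flipS]
          exact hU.2
      _ = (P.card : ℝ) * (α^(2*R) * D z) := by rw [sum_const, nsmul_eq_mul]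
  -- step: binomial bound  on P.card
  have hPcard : (P.card : ℝ) * (lam α k - 1)^(2*R)
      ≤ (2*R+1) * (lam α k) ^ ((crit φ z).card) := by
    have h1 : (P.card : ℝ) ≤ ∑ j ∈ range (2*R+1), (((crit φ z).card).choose j : ℝ) := by
      rw [hPdef]
      exact_mod_cast Pcard_le φ z R
    have h2 : ∑ j ∈ range (2*R+1), (((crit φ z).card).choose j : ℝ) * (lam α k - 1)^(2*R)
        ≤ (2*R+1) * (lam α k) ^ ((crit φ z).card) := by
      calc ∑ j ∈ range (2*R+1), (((crit φ z).card).choose j : ℝ) * (lam α k - 1)^(2*R)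
          ≤ ∑ _j ∈ range (2*R+1), (lam α k) ^ ((crit φ z).card) := by
            apply sum_le_sum
            intro j hj
            exact choose_bound hlam1 hlam2 _ j (2*R) (by rw [mem_range] at hj; omega)
        _ = (2*R+1) * (lam α k) ^ ((crit φ z).card) := by
            rw [sum_const, card_range, nsmul_eq_mul]
            push_cast
            ring
    calc (P.card : ℝ) * (lam α k - 1)^(2*R)
        ≤ (∑ j ∈ range (2*R+1), (((crit φ z).card).choose j : ℝ)) * (lam α k - 1)^(2*R) := by
          apply mul_le_mul_of_nonneg_right h1
          have : (0:ℝ) ≤ lam α k - 1 := by linarith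
          positivity
      _ = ∑ j ∈ range (2*R+1), (((crit φ z).card).choose j : ℝ) * (lam α k - 1)^(2*R) := by
          rw [sum_mul]
      _ ≤ _ := h2
  -- combine
  have hDz : 0 ≤ D z := le_of_lt (hD.1 z)
  have hlm0 : (0:ℝ) ≤ lam α k - 1 := by linarith
  have hchain : (∑ x ∈ cell, Real.sqrt (D x))^2
      ≤ α^R * (16^R * ((P.card : ℝ) * (α^(2*R) * D z))) := by
    refine le_trans hpair ?_
    apply mul_le_mul_of_nonneg_left _ (by positivity)
    refine le_trans hregroup ?_
    apply mul_le_mul_of_nonneg_left hPsum (by positivity)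
  calc (∑ x ∈ cell, Real.sqrt (D x))^2 * (lam α k - 1)^(2*R)
      ≤ (α^R * (16^R * ((P.card : ℝ) * (α^(2*R) * D z)))) * (lam α k - 1)^(2*R) := by
        apply mul_le_mul_of_nonneg_right hchain (by positivity)
    _ = (α^(3*R) * 16^R * D z) * ((P.card : ℝ) * (lam α k - 1)^(2*R)) := by
        rw [show 3*R = R + 2*R by omega, pow_add]
        ring
    _ ≤ (α^(3*R) * 16^R * D z) * ((2*R+1) * (lam α k) ^ ((crit φ z).card)) := by
        apply mul_le_mul_of_nonneg_left hPcard (by positivity)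
    _ = α^(3*R) * 16^R * (2*R+1) * (D z * (lam α k) ^ ((crit φ z).card)) := by ring

open Classical in
lemma pr_eq_Bset (R : ℕ) :
    pr D (fun x => ∃ z, hammingDist x z ≤ R ∧ SatCNF φ z) = ∑ x ∈ Bset φ R, D x := by
  rw [pr_eq_sum_filter, Bset]
  exact sum_congr (by ext x; simp) (fun _ _ => rfl)

open Classical in
lemma pr_eq_Zset : pr D (SatCNF φ) = ∑ z ∈ Zset φ, D z := by
  rw [pr_eq_sum_filter, Zset]

open Classical in
theorem key (hφ : IsKCNF k φ) (hk : 1 ≤ k) (hD : IsDistribution D)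
    (hL : LogLipschitz α D) (hα : 1 ≤ α) (R : ℕ) :
    (pr D (fun x => ∃ z, hammingDist x z ≤ R ∧ SatCNF φ z))^2
      ≤ (2*(R:ℝ)+1) * (16 * α^4 / (lam α k - 1)^2)^R * pr D (SatCNF φ) := by
  have hax : (0:ℝ) < α := lt_of_lt_of_le one_pos hα
  have hlam1 : 1 < lam α k := one_lt_lam hα hk
  have hlm0 : (0:ℝ) < lam α k - 1 := by linarith
  set G : Pt n → ℝ := fun z => ∑ x ∈ (Bset φ R).filter (fun x => near φ x = z),
    Real.sqrt (D x) with hGdef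
  set prB := pr D (fun x => ∃ z, hammingDist x z ≤ R ∧ SatCNF φ z) with hprBdef
  set p := pr D (SatCNF φ) with hpdef
  have hp0 : 0 ≤ p := pr_nonneg D hD _
  have hprB0 : 0 ≤ prB := pr_nonneg D hD _
  have hmaps : ∀ x ∈ Bset φ R, near φ x ∈ Zset φ := fun x hx => (near_spec φ hx).1
  -- step 1
  have hstep1 : prB ≤ Real.sqrt (α^R) * ∑ z ∈ Zset φ, Real.sqrt (D z) * G z := by
    rw [hprBdef, pr_eq_Bset]
    rw [← sum_fiberwise_of_maps_to hmaps D]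
    rw [mul_sum]
    apply sum_le_sum
    intro z hz
    rw [hGdef]
    have hper : ∀ x ∈ (Bset φ R).filter (fun x => near φ x = z),
        D x ≤ (Real.sqrt (α^R) * Real.sqrt (D z)) * Real.sqrt (D x) := by
      intro x hx
      rw [mem_filter] at hx
      have hd : hammingDist x z ≤ R := by
        have := (near_spec φ hx.1).2.2
        rwa [hx.2] at this
      have hlip : D x ≤ α^R * D z := lip_pow_le hD hL hα hd
      have h1 : Real.sqrt (D x) ≤ Real.sqrt (α^R) * Real.sqrt (D z) := by
        rw [← Real.sqrt_mul (by positivity)]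
        exact Real.sqrt_le_sqrt hlip
      calc D x = Real.sqrt (D x) * Real.sqrt (D x) :=
            (Real.mul_self_sqrt (le_of_lt (hD.1 x))).symm
        _ ≤ (Real.sqrt (α^R) * Real.sqrt (D z)) * Real.sqrt (D x) :=
            mul_le_mul_of_nonneg_right h1 (Real.sqrt_nonneg _)
    calc ∑ x ∈ (Bset φ R).filter (fun x => near φ x = z), D x
        ≤ ∑ x ∈ (Bset φ R).filter (fun x => near φ x = z),
            (Real.sqrt (α^R) * Real.sqrt (D z)) * Real.sqrt (D x) := sum_le_sum hper
      _ = Real.sqrt (α^R) * (Real.sqrt (D z) *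
            ∑ x ∈ (Bset φ R).filter (fun x => near φ x = z), Real.sqrt (D x)) := by
          rw [← mul_sum]
          ring
  -- step 2 (Cauchy-Schwarz)
  have hstep2 : (∑ z ∈ Zset φ, Real.sqrt (D z) * G z)^2
      ≤ p * ∑ z ∈ Zset φ, (G z)^2 := by
    have hcs := sum_mul_sq_le_sq_mul_sq (Zset φ) (fun z => Real.sqrt (D z)) G
    have hsq : ∑ z ∈ Zset φ, (Real.sqrt (D z))^2 = p := by
      rw [hpdef, pr_eq_Zset]
      apply sum_congr rfl
      intro z _
      rw [Real.sq_sqrt (le_of_lt (hD.1 z))]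
    rwa [hsq] at hcs
  -- step 3
  have hstep3 : (∑ z ∈ Zset φ, (G z)^2) * (lam α k - 1)^(2*R)
      ≤ α^(3*R) * 16^R * (2*(R:ℝ)+1) := by
    rw [sum_mul]
    calc ∑ z ∈ Zset φ, (G z)^2 * (lam α k - 1)^(2*R)
        ≤ ∑ z ∈ Zset φ, α^(3*R) * 16^R * (2*(R:ℝ)+1)
            * (D z * (lam α k) ^ ((crit φ z).card)) := by
          apply sum_le_sum
          intro z hz
          have := cell_sq_bound φ D hφ hk hD hL hα R hz
          rw [hGdef]
          exact this
      _ = α^(3*R) * 16^R * (2*(R:ℝ)+1)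
            * ∑ z ∈ Zset φ, D z * (lam α k) ^ ((crit φ z).card) := by rw [mul_sum]
      _ ≤ α^(3*R) * 16^R * (2*(R:ℝ)+1) * 1 := by
          apply mul_le_mul_of_nonneg_left (ppz φ D hφ hk hD hL hα)
          positivity
      _ = α^(3*R) * 16^R * (2*(R:ℝ)+1) := mul_one _
  -- combine
  have hM0 : 0 ≤ ∑ z ∈ Zset φ, (G z)^2 := sum_nonneg (fun z _ => sq_nonneg _)
  have hX0 : 0 ≤ ∑ z ∈ Zset φ, Real.sqrt (D z) * G z := by
    apply sum_nonneg
    intro z _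
    apply mul_nonneg (Real.sqrt_nonneg _)
    rw [hGdef]
    exact sum_nonneg (fun x _ => Real.sqrt_nonneg _)
  have hsq1 : prB^2 ≤ α^R * (p * ∑ z ∈ Zset φ, (G z)^2) := by
    calc prB^2 ≤ (Real.sqrt (α^R) * ∑ z ∈ Zset φ, Real.sqrt (D z) * G z)^2 :=
          pow_le_pow_left₀ hprB0 hstep1 2
      _ = α^R * (∑ z ∈ Zset φ, Real.sqrt (D z) * G z)^2 := by
          rw [mul_pow, Real.sq_sqrt (by positivity)]
      _ ≤ α^R * (p * ∑ z ∈ Zset φ, (G z)^2) :=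
          mul_le_mul_of_nonneg_left hstep2 (by positivity)
  have hmain : prB^2 * (lam α k - 1)^(2*R)
      ≤ (2*(R:ℝ)+1) * (16*α^4)^R * p := by
    calc prB^2 * (lam α k - 1)^(2*R)
        ≤ (α^R * (p * ∑ z ∈ Zset φ, (G z)^2)) * (lam α k - 1)^(2*R) := by
          apply mul_le_mul_of_nonneg_right hsq1 (by positivity)
      _ = (α^R * p) * ((∑ z ∈ Zset φ, (G z)^2) * (lam α k - 1)^(2*R)) := by ring
      _ ≤ (α^R * p) * (α^(3*R) * 16^R * (2*(R:ℝ)+1)) := by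
          apply mul_le_mul_of_nonneg_left hstep3 (by positivity)
      _ = (2*(R:ℝ)+1) * (α^(4*R) * 16^R) * p := by
          rw [show 4*R = R + 3*R by omega, pow_add]
          ring
      _ = (2*(R:ℝ)+1) * (16*α^4)^R * p := by
          rw [mul_pow, show 4*R = 4*R from rfl]
          rw [pow_mul α 4 R]
          ring
  -- divide by (lam-1)^(2R)
  have hQ : (0:ℝ) < ((lam α k - 1)^2)^R := by positivity
  have hpow : ((lam α k - 1)^2)^R = (lam α k - 1)^(2*R) := by rw [← pow_mul]
  have hrw : ((2*(R:ℝ)+1) * (16 * α^4 / (lam α k - 1)^2)^R * p) * ((lam α k - 1)^2)^R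
      = (2*(R:ℝ)+1) * (16*α^4)^R * p := by
    rw [show ((2*(R:ℝ)+1) * (16 * α^4 / (lam α k - 1)^2)^R * p) * ((lam α k - 1)^2)^R
        = (2*(R:ℝ)+1) * ((16 * α^4 / (lam α k - 1)^2)^R * ((lam α k - 1)^2)^R) * p
        by ring]
    rw [← mul_pow, div_mul_cancel₀]
    positivity
  have hfinal : prB^2 * ((lam α k - 1)^2)^R
      ≤ ((2*(R:ℝ)+1) * (16 * α^4 / (lam α k - 1)^2)^R * p) * ((lam α k - 1)^2)^R := by
    rw [hrw, hpow]
    exact hmain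
  exact le_of_mul_le_mul_right hfinal hQ

end Key

lemma two_mul_add_one_le (R : ℕ) : (2*(R:ℝ)+1) ≤ 3 * 2^R := by
  have h : 2*R+1 ≤ 3 * 2^R := by
    induction R with
    | zero => norm_num
    | succ R ih =>
      have h2 : 2^R ≥ 1 := Nat.one_le_two_pow
      calc 2*(R+1)+1 = (2*R+1) + 2 := by omega
        _ ≤ 3*2^R + 2 := by omega
        _ ≤ 3*2^R + 3*2^R := by omega
        _ = 3*2^(R+1) := by ring
  calc (2*(R:ℝ)+1) = ((2*R+1 : ℕ) : ℝ) := by push_cast; ring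
    _ ≤ ((3 * 2^R : ℕ) : ℝ) := by exact_mod_cast h
    _ = 3 * 2^R := by push_cast; ring

end KP

theorem kCNF_log_expansion_bound' (α : ℝ) (hα : 1 ≤ α) (k : ℕ) (hk : 1 ≤ k) :
    ∃ C₁ C₂ C₃ C₄ : ℝ, 0 < C₁ ∧ 0 ≤ C₂ ∧ 0 ≤ C₃ ∧ 0 ≤ C₄ ∧
      ∀ n : ℕ, ∀ φ : CNF n, IsKCNF k φ →
        ∀ D : (Fin n → Bool) → ℝ, IsDistribution D → LogLipschitz α D →
          ∀ ε : ℝ, 0 < ε → ε < 1 / 2 →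
            pr D (SatCNF φ) < C₁ * ε ^ C₂ * min (ε ^ C₃) ((n : ℝ) ^ (-C₄)) →
            pr D (fun x => ∃ z, hammingDist x z ≤ Nat.log 2 n ∧ SatCNF φ z) ≤ ε := by
  classical
  have hax : (0:ℝ) < α := lt_of_lt_of_le one_pos hα
  have hlam1 : 1 < KP.lam α k := KP.one_lt_lam hα hk
  set κ : ℝ := 16 * α^4 / (KP.lam α k - 1)^2 with hκdef
  have hκpos : 0 < κ := by
    rw [hκdef]
    have : 0 < KP.lam α k - 1 := by linarith
    positivity
  set E : ℝ := max 2 (2*κ) with hEdef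
  have hE2 : (2:ℝ) ≤ E := le_max_left _ _
  have hE1 : (1:ℝ) ≤ E := by linarith
  have hEpos : (0:ℝ) < E := by linarith
  refine ⟨1/3, 2, 0, Real.logb 2 E, by norm_num, by norm_num, le_refl 0, ?_, ?_⟩
  · exact Real.logb_nonneg (by norm_num) hE1
  intro n φ hφ D hD hL ε hε hε2 hyp
  set C₄ : ℝ := Real.logb 2 E with hC4def
  have hC4_1 : 1 ≤ C₄ := by
    rw [hC4def]
    calc (1:ℝ) = Real.logb 2 2 := by simp
      _ ≤ Real.logb 2 E := by
          apply Real.logb_le_logb_of_le (by norm_num) (by norm_num) hE2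
  have hprB0 : 0 ≤ pr D (fun x => ∃ z, hammingDist x z ≤ Nat.log 2 n ∧ SatCNF φ z) :=
    KP.pr_nonneg D hD _
  have hp0 : 0 ≤ pr D (SatCNF φ) := KP.pr_nonneg D hD _
  rcases Nat.eq_zero_or_pos n with hn0 | hnpos
  · -- n = 0 : hypothesis is contradictory
    exfalso
    subst hn0
    have h1 : ((0:ℕ):ℝ) ^ (-C₄) = 0 := by
      rw [Nat.cast_zero]
      apply Real.zero_rpow
      intro h
      rw [neg_eq_zero] at h
      linarith
    rw [h1] at hyp
    have h2 : min (ε ^ (0:ℝ)) (0:ℝ) = 0 := by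
      apply min_eq_right
      rw [Real.rpow_zero]
      norm_num
    rw [h2, mul_zero] at hyp
    linarith
  · -- main case n ≥ 1
    have hn1 : (1:ℝ) ≤ (n:ℝ) := by exact_mod_cast hnpos
    have hnR : (0:ℝ) < (n:ℝ) := by linarith
    -- simplify the min
    have hmin : min (ε ^ (0:ℝ)) ((n:ℝ) ^ (-C₄)) = (n:ℝ) ^ (-C₄) := by
      apply min_eq_right
      rw [Real.rpow_zero]
      apply Real.rpow_le_one_of_one_le_of_nonpos hn1
      linarith
    rw [hmin] at hyp
    set R := Nat.log 2 n with hRdef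
    have hkey := KP.key φ D hφ hk hD hL hα R
    -- bound the constant
    have hconst : (2*(R:ℝ)+1) * κ^R ≤ 3 * (n:ℝ) ^ C₄ := by
      have h1 : (2*(R:ℝ)+1) * κ^R ≤ 3 * (2*κ)^R := by
        calc (2*(R:ℝ)+1) * κ^R ≤ (3 * 2^R) * κ^R :=
              mul_le_mul_of_nonneg_right (KP.two_mul_add_one_le R) (by positivity)
          _ = 3 * (2*κ)^R := by rw [mul_pow]; ring
      have h2 : (2*κ)^R ≤ E^R := by
        apply pow_le_pow_left₀ (by positivity) (le_max_right _ _)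
      have h3 : E^R ≤ (n:ℝ) ^ C₄ := by
        have hlog : (R:ℝ) ≤ Real.logb 2 (n:ℝ) := by
          rw [Real.le_logb_iff_rpow_le (by norm_num) hnR]
          have hle : (2:ℕ)^R ≤ n := by
            rw [hRdef]
            exact Nat.pow_log_le_self 2 (by omega)
          calc (2:ℝ) ^ (R:ℝ) = ((2:ℕ):ℝ)^(R:ℕ) := by
                rw [Real.rpow_natCast]; norm_num
            _ ≤ (n:ℝ) := by exact_mod_cast hle
        calc E^R = E^((R:ℕ):ℝ) := by rw [Real.rpow_natCast]
          _ ≤ E ^ (Real.logb 2 (n:ℝ)) := Real.rpow_le_rpow_of_exponent_le hE1 hlog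
          _ = ((2:ℝ) ^ (Real.logb 2 E)) ^ (Real.logb 2 (n:ℝ)) := by
              rw [Real.rpow_logb (by norm_num) (by norm_num) hEpos]
          _ = (2:ℝ) ^ (Real.logb 2 E * Real.logb 2 (n:ℝ)) := by
              rw [← Real.rpow_mul (by norm_num)]
          _ = ((2:ℝ) ^ (Real.logb 2 (n:ℝ))) ^ (Real.logb 2 E) := by
              rw [← Real.rpow_mul (by norm_num), mul_comm]
          _ = (n:ℝ) ^ C₄ := by
              rw [Real.rpow_logb (by norm_num) (by norm_num) hnR, hC4def]
      calc (2*(R:ℝ)+1) * κ^R ≤ 3 * (2*κ)^R := h1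
        _ ≤ 3 * E^R := by linarith [h2]
        _ ≤ 3 * (n:ℝ)^C₄ := by linarith [h3]
    -- combine everything
    have hsq : (pr D (fun x => ∃ z, hammingDist x z ≤ Nat.log 2 n ∧ SatCNF φ z))^2
        < ε^2 := by
      have hb1 : (pr D (fun x => ∃ z, hammingDist x z ≤ Nat.log 2 n ∧ SatCNF φ z))^2
          ≤ (3 * (n:ℝ)^C₄) * pr D (SatCNF φ) := by
        refine le_trans hkey ?_
        exact mul_le_mul_of_nonneg_right hconst hp0
      have hb2 : (3 * (n:ℝ)^C₄) * pr D (SatCNF φ)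
          < (3 * (n:ℝ)^C₄) * (1/3 * ε ^ (2:ℝ) * (n:ℝ) ^ (-C₄)) := by
        apply mul_lt_mul_of_pos_left hyp
        positivity
      have hb3 : (3 * (n:ℝ)^C₄) * (1/3 * ε ^ (2:ℝ) * (n:ℝ) ^ (-C₄)) = ε^2 := by
        have hcancel : (n:ℝ)^C₄ * (n:ℝ)^(-C₄) = 1 := by
          rw [← Real.rpow_add hnR]
          simp
        have hεp : ε ^ (2:ℝ) = ε^(2:ℕ) := by
          rw [← Real.rpow_natCast ε 2]
          norm_num
        calc (3 * (n:ℝ)^C₄) * (1/3 * ε ^ (2:ℝ) * (n:ℝ) ^ (-C₄))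
            = ((n:ℝ)^C₄ * (n:ℝ)^(-C₄)) * ε ^ (2:ℝ) * (3 * (1/3)) := by ring
          _ = ε ^ (2:ℝ) := by rw [hcancel]; norm_num
          _ = ε^2 := hεp
      exact lt_of_le_of_lt hb1 (lt_of_lt_of_eq hb2 hb3)
    by_contra hcon
    push_neg at hcon
    have hcon2 := pow_le_pow_left₀ (le_of_lt hε) (le_of_lt hcon) 2
    linarith

theorem kCNF_log_expansion_bound (α : ℝ) (hα : 1 ≤ α) (k : ℕ) (hk : 1 ≤ k) :
    ∃ C₁ C₂ C₃ C₄ : ℝ, 0 < C₁ ∧ 0 ≤ C₂ ∧ 0 ≤ C₃ ∧ 0 ≤ C₄ ∧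
      ∀ n : ℕ, ∀ φ : CNF n, IsKCNF k φ →
        ∀ D : (Fin n → Bool) → ℝ, IsDistribution D → LogLipschitz α D →
          ∀ ε : ℝ, 0 < ε → ε < 1 / 2 →
            pr D (SatCNF φ) < C₁ * ε ^ C₂ * min (ε ^ C₃) ((n : ℝ) ^ (-C₄)) →
            pr D (fun x => ∃ z, hammingDist x z ≤ Nat.log 2 n ∧ SatCNF φ z) ≤ ε := by
  exact kCNF_log_expansion_bound' α hα k hk
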